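/- Let R be a rewrite system over F and t ∈ T(F, X). For every ground substitution α with Var(t) ⊆ Dom(α) that maps every abstraction variable occurring in t to an R-normal form, and every innermost rewrite chain αt →^inn_{p_1, l_1→r_1} t_1 →^inn_{p_2, l_2→r_2} t_2 →^inn … →^inn_{p_n, l_n→r_n} t_n starting from αt, every rule used in the chain belongs to the usable rules of t: l_i→r_i ∈ U(t) for all i ∈ {1,…,n}. -/

import Mathlib

namespace TRS

inductive Term (F V : Type*) where
  | var : V → Term F V
  | app : F → List (Term F V) → Term F V

namespace Term

variable {F V : Type*}

mutual
  def subst (σ : V → Term F V) : Term F V → Term F V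
    | .var x => σ x
    | .app f ts => .app f (substList σ ts)

  def substList (σ : V → Term F V) : List (Term F V) → List (Term F V)
    | [] => []
    | t :: ts => subst σ t :: substList σ ts
end

mutual
  def vars : Term F V → Set V
    | .var x => {x}
    | .app _ ts => varsList ts

  def varsList : List (Term F V) → Set V
    | [] => ∅
    | t :: ts => vars t ∪ varsList ts
end

def IsGround (t : Term F V) : Prop := vars t = ∅

def top : Term F V → Option F
  | .var _ => none
  | .app f _ => some f

def subtermAt : List ℕ → Term F V → Option (Term F V)
  | [], t => some t
  | _ :: _, .var _ => none
  | i :: p, .app _ ts =>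
    match ts[i]? with
    | none => none
    | some u => subtermAt p u

def replaceAt : List ℕ → Term F V → Term F V → Option (Term F V)
  | [], _, u => some u
  | _ :: _, .var _, _ => none
  | i :: p, .app f ts, u =>
    match ts[i]? with
    | none => none
    | some ti =>
      match replaceAt p ti u with
      | none => none
      | some ti' => some (.app f (ts.set i ti'))

inductive WF (arity : F → ℕ) : Term F V → Prop
  | var (x : V) : WF arity (.var x)
  | app (f : F) (ts : List (Term F V)) :
      ts.length = arity f → (∀ t ∈ ts, WF arity t) → WF arity (.app f ts)

inductive Occurs (f : F) : Term F V → Prop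
  | head (ts : List (Term F V)) : Occurs f (.app f ts)
  | arg {g : F} {ts : List (Term F V)} {t : Term F V} :
      t ∈ ts → Occurs f t → Occurs f (.app g ts)

end Term

open Term

structure Rule (F V : Type*) where
  lhs : Term F V
  rhs : Term F V

variable {F V : Type*}

/-- The domain of a substitution. -/
def SDom (σ : V → Term F V) : Set V := {x | σ x ≠ Term.var x}

/-- The range (variables) of a substitution. -/
def SRan (σ : V → Term F V) : Set V := ⋃ x ∈ SDom σ, vars (σ x)

/-- A ground substitution maps every variable of its domain to a ground term. -/
def GroundSubst (σ : V → Term F V) : Prop := ∀ x ∈ SDom σ, IsGround (σ x)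

/-- `R` is a rewrite system: no left-hand side is a variable, and
`Var(rhs) ⊆ Var(lhs)` for every rule. -/
def IsRS (R : List (Rule F V)) : Prop :=
  ∀ ρ ∈ R, (∀ x : V, ρ.lhs ≠ Term.var x) ∧ vars ρ.rhs ⊆ vars ρ.lhs

/-- Rewriting at position `p` with the rule `l → r`. -/
def RewriteAtWith (l r : Term F V) (p : List ℕ) (s t : Term F V) : Prop :=
  ∃ τ : V → Term F V, subtermAt p s = some (subst τ l) ∧ replaceAt p s (subst τ r) = some t

/-- Rewriting at position `p` with some rule of `R`. -/
def RewriteAt (R : List (Rule F V)) (p : List ℕ) (s t : Term F V) : Prop :=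
  ∃ ρ ∈ R, RewriteAtWith ρ.lhs ρ.rhs p s t

/-- The rewriting relation induced by `R`. -/
def Rewrite (R : List (Rule F V)) (s t : Term F V) : Prop :=
  ∃ p, RewriteAt R p s t

def ReducibleAt (R : List (Rule F V)) (s : Term F V) (p : List ℕ) : Prop :=
  ∃ t, RewriteAt R p s t

def Reducible (R : List (Rule F V)) (s : Term F V) : Prop :=
  ∃ t, Rewrite R s t

def NormalForm (R : List (Rule F V)) (s : Term F V) : Prop := ¬ Reducible R s

/-- `n` is a normal form of `s`. -/
def IsNormalFormOf (R : List (Rule F V)) (s n : Term F V) : Prop :=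
  Relation.ReflTransGen (Rewrite R) s n ∧ NormalForm R n

/-- `q` is strictly below `p` (`p` is a strict prefix of `q`). -/
def StrictBelow (p q : List ℕ) : Prop := p <+: q ∧ p ≠ q

/-- Innermost rewrite step at position `p`. -/
def InnAt (R : List (Rule F V)) (p : List ℕ) (s t : Term F V) : Prop :=
  RewriteAt R p s t ∧ ∀ q, StrictBelow p q → ¬ ReducibleAt R s q

def InnStep (R : List (Rule F V)) (s t : Term F V) : Prop := ∃ p, InnAt R p s t

/-- Outermost rewrite step at position `p`. -/
def OutAt (R : List (Rule F V)) (p : List ℕ) (s t : Term F V) : Prop :=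
  RewriteAt R p s t ∧ ∀ q, StrictBelow q p → ¬ ReducibleAt R s q

def OutStep (R : List (Rule F V)) (s t : Term F V) : Prop := ∃ p, OutAt R p s t

/-- Innermost rewrite step at position `p` with rule `l → r`. -/
def InnAtWith (R : List (Rule F V)) (l r : Term F V) (p : List ℕ) (s t : Term F V) : Prop :=
  RewriteAtWith l r p s t ∧ ∀ q, StrictBelow p q → ¬ ReducibleAt R s q

/-- Outermost rewrite step at position `p` with rule `l → r`. -/
def OutAtWith (R : List (Rule F V)) (l r : Term F V) (p : List ℕ) (s t : Term F V) : Prop :=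
  RewriteAtWith l r p s t ∧ ∀ q, StrictBelow q p → ¬ ReducibleAt R s q

/-- No infinite innermost derivation starts from `t`. -/
def InnTerminates (R : List (Rule F V)) (t : Term F V) : Prop :=
  ¬ ∃ f : ℕ → Term F V, f 0 = t ∧ ∀ n, InnStep R (f n) (f (n + 1))

/-- No infinite outermost derivation starts from `t`. -/
def OutTerminates (R : List (Rule F V)) (t : Term F V) : Prop :=
  ¬ ∃ f : ℕ → Term F V, f 0 = t ∧ ∀ n, OutStep R (f n) (f (n + 1))

def Unifies (σ : V → Term F V) (u v : Term F V) : Prop := subst σ u = subst σ v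

/-- `σ` is a most general unifier of `u` and `v`. -/
def IsMGU (u v : Term F V) (σ : V → Term F V) : Prop :=
  Unifies σ u v ∧
    ∀ τ : V → Term F V, Unifies τ u v → ∃ ρ : V → Term F V, ∀ x, subst ρ (σ x) = τ x

/-- The usable rules of a term (least set closed under the defining equations). -/
inductive Usable (R : List (Rule F V)) (XA : Set V) : Term F V → Rule F V → Prop
  | var {x : V} {ρ : Rule F V} : x ∉ XA → ρ ∈ R → Usable R XA (Term.var x) ρ
  | rls {f : F} {ts : List (Term F V)} {ρ : Rule F V} :
      ρ ∈ R → Term.top ρ.lhs = some f → Usable R XA (Term.app f ts) ρ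
  | arg {f : F} {ts : List (Term F V)} {t : Term F V} {ρ : Rule F V} :
      t ∈ ts → Usable R XA t ρ → Usable R XA (Term.app f ts) ρ
  | rhs {f : F} {ts : List (Term F V)} {ρ' ρ : Rule F V} :
      ρ' ∈ R → Term.top ρ'.lhs = some f → Usable R XA ρ'.rhs ρ → Usable R XA (Term.app f ts) ρ


section Aux

open Term

variable {F V : Type*}

theorem substList_eq_map (σ : V → Term F V) (ts : List (Term F V)) :
    substList σ ts = ts.map (subst σ) := by
  induction ts with
  | nil => rfl
  | cons t ts ih => simp [substList, subst, ih]

theorem varsList_eq (ts : List (Term F V)) :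
    varsList ts = ⋃ t ∈ ts, vars t := by
  induction ts with
  | nil => simp [varsList]
  | cons t ts ih => simp [varsList, ih]

mutual
theorem ground_subst (σ : V → Term F V) :
    ∀ u : Term F V, (∀ x ∈ vars u, IsGround (σ x)) → IsGround (subst σ u)
  | .var x, h => by simpa [subst, IsGround] using h x (by simp [vars])
  | .app f ts, h => by
      have := ground_substList σ ts (by simpa [vars] using h)
      simpa [IsGround, subst, vars] using this
theorem ground_substList (σ : V → Term F V) :
    ∀ ts : List (Term F V), (∀ x ∈ varsList ts, IsGround (σ x)) →
      varsList (substList σ ts) = ∅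
  | [], _ => by simp [substList, varsList]
  | u :: ts, h => by
      have h1 := ground_subst σ u (fun x hx => h x (by simp [varsList]; exact Or.inl hx))
      have h2 := ground_substList σ ts (fun x hx => h x (by simp [varsList]; exact Or.inr hx))
      simp only [substList, varsList, h2]
      simpa [IsGround] using h1
end

theorem vars_subtermAt :
    ∀ (q : List ℕ) (s w : Term F V), subtermAt q s = some w → vars w ⊆ vars s := by
  intro q
  induction q with
  | nil => intro s w h; cases h; exact subset_refl _
  | cons i q ih =>
      intro s w h
      cases s with
      | var y => simp [subtermAt] at h
      | app f ts =>
          rw [subtermAt] at h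
          cases hti : ts[i]? with
          | none => rw [hti] at h; simp at h
          | some ti =>
              rw [hti] at h
              have hsub := ih ti w h
              have hmem : ti ∈ ts := List.mem_of_getElem? hti
              refine hsub.trans ?_
              rw [show vars (Term.app f ts) = varsList ts from rfl, varsList_eq]
              exact Set.subset_biUnion_of_mem hmem

theorem subtermAt_subst (σ : V → Term F V) :
    ∀ (q : List ℕ) (u w : Term F V), subtermAt q u = some w →
      subtermAt q (subst σ u) = some (subst σ w) := by
  intro q
  induction q with
  | nil => intro u w h; cases h; rfl
  | cons i q ih =>
      intro u w h
      cases u with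
      | var y => simp [subtermAt] at h
      | app f ts =>
          rw [subtermAt] at h
          cases hti : ts[i]? with
          | none => rw [hti] at h; simp at h
          | some ti =>
              rw [hti] at h
              rw [show subst σ (Term.app f ts) = Term.app f (ts.map (subst σ)) by
                simp [subst, substList_eq_map]]
              rw [subtermAt]
              have hmap : (ts.map (subst σ))[i]? = some (subst σ ti) := by
                simp [List.getElem?_map, hti]
              rw [hmap]
              exact ih ti w h

theorem replaceAt_isSome :
    ∀ (q : List ℕ) (s w : Term F V), subtermAt q s = some w →
      ∀ v, ∃ s', replaceAt q s v = some s' := by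
  intro q
  induction q with
  | nil => intro s w _ v; exact ⟨v, rfl⟩
  | cons i q ih =>
      intro s w h v
      cases s with
      | var y => simp [subtermAt] at h
      | app f ts =>
          rw [subtermAt] at h
          cases hti : ts[i]? with
          | none => rw [hti] at h; simp at h
          | some ti =>
              rw [hti] at h
              obtain ⟨s', hs'⟩ := ih ti w h v
              exact ⟨Term.app f (ts.set i s'), by simp only [replaceAt, hti, hs']⟩

theorem subtermAt_append :
    ∀ (q : List ℕ) (s w : Term F V), subtermAt q s = some w →
      ∀ q', subtermAt (q ++ q') s = subtermAt q' w := by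
  intro q
  induction q with
  | nil => intro s w h q'; cases h; rfl
  | cons i q ih =>
      intro s w h q'
      cases s with
      | var y => simp [subtermAt] at h
      | app f ts =>
          rw [subtermAt] at h
          cases hti : ts[i]? with
          | none => rw [hti] at h; simp at h
          | some ti =>
              rw [hti] at h
              rw [List.cons_append, subtermAt, hti]
              exact ih ti w h q'

theorem reducibleAt_lift (R : List (Rule F V)) :
    ∀ (q : List ℕ) (g w : Term F V), subtermAt q g = some w →
      ∀ q', ReducibleAt R w q' → ReducibleAt R g (q ++ q') := by
  rintro q g w h q' ⟨w', ρ, hρ, τ, h1, h2⟩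
  have hsub : subtermAt (q ++ q') g = some (subst τ ρ.lhs) := by
    rw [subtermAt_append q g w h q', h1]
  obtain ⟨g', hg'⟩ := replaceAt_isSome (q ++ q') g _ hsub (subst τ ρ.rhs)
  exact ⟨g', ρ, hρ, τ, hsub, hg'⟩

mutual
theorem usable_of_var (R : List (Rule F V)) (XA : Set V) {x : V} (hx : x ∉ XA)
    {ρ : Rule F V} (hρ : ρ ∈ R) :
    ∀ u : Term F V, x ∈ vars u → Usable R XA u ρ
  | .var y, h => by
      have hxy : x = y := by simpa [vars] using h
      subst hxy
      exact Usable.var hx hρ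
  | .app f ts, h => by
      obtain ⟨ti, hmem, hu⟩ := usable_of_var_list R XA hx hρ ts (by simpa [vars] using h)
      exact Usable.arg hmem hu
theorem usable_of_var_list (R : List (Rule F V)) (XA : Set V) {x : V} (hx : x ∉ XA)
    {ρ : Rule F V} (hρ : ρ ∈ R) :
    ∀ ts : List (Term F V), x ∈ varsList ts → ∃ ti ∈ ts, Usable R XA ti ρ
  | t :: ts, h => by
      rcases (by simpa [varsList] using h : x ∈ vars t ∨ x ∈ varsList ts) with h' | h'
      · exact ⟨t, List.mem_cons_self, usable_of_var R XA hx hρ t h'⟩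
      · obtain ⟨ti, hmem, hu⟩ := usable_of_var_list R XA hx hρ ts h'
        exact ⟨ti, List.mem_cons_of_mem _ hmem, hu⟩
end

mutual
theorem exists_subterm_var {x : V} :
    ∀ u : Term F V, x ∈ vars u → ∃ q, subtermAt q u = some (Term.var x)
  | .var y, h => by
      have hxy : x = y := by simpa [vars] using h
      subst hxy
      exact ⟨[], rfl⟩
  | .app f ts, h => by
      obtain ⟨i, ti, q, hti, hq⟩ := exists_subterm_var_list ts (by simpa [vars] using h)
      exact ⟨i :: q, by rw [subtermAt, hti]; exact hq⟩
theorem exists_subterm_var_list {x : V} :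
    ∀ ts : List (Term F V), x ∈ varsList ts →
      ∃ (i : ℕ) (ti : Term F V) (q : List ℕ),
        ts[i]? = some ti ∧ subtermAt q ti = some (Term.var x)
  | t :: ts, h => by
      rcases (by simpa [varsList] using h : x ∈ vars t ∨ x ∈ varsList ts) with h' | h'
      · obtain ⟨q, hq⟩ := exists_subterm_var t h'
        exact ⟨0, t, q, by simp, hq⟩
      · obtain ⟨i, ti, q, hti, hq⟩ := exists_subterm_var_list ts h'
        exact ⟨i + 1, ti, q, by simpa using hti, hq⟩
end

/-- `Matches R u g` : `g` is obtained from `u` by replacing each variable occurrence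
by a ground `R`-normal form. -/
inductive Matches (R : List (Rule F V)) : Term F V → Term F V → Prop
  | var (x : V) (g : Term F V) : IsGround g → NormalForm R g → Matches R (.var x) g
  | app (f : F) {us gs : List (Term F V)} :
      us.length = gs.length →
      (∀ (i : ℕ) (ui gi : Term F V), us[i]? = some ui → gs[i]? = some gi → Matches R ui gi) →
      Matches R (.app f us) (.app f gs)

theorem Matches.ground {R : List (Rule F V)} {u g : Term F V} (h : Matches R u g) :
    IsGround g := by
  induction h with
  | var x g hg _ => exact hg
  | app f hlen hall ih =>
      rename_i us gs
      show vars (Term.app _ gs) = ∅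
      rw [show vars (Term.app _ gs) = varsList gs from rfl, varsList_eq]
      simp only [Set.iUnion_eq_empty]
      intro gi hmem
      obtain ⟨i, hi, hgi⟩ := List.getElem_of_mem hmem
      have hgi' : gs[i]? = some gi := by rw [List.getElem?_eq_getElem hi, hgi]
      have hus : us[i]? = some us[i] := List.getElem?_eq_getElem (by omega)
      exact ih i us[i] gi hus hgi'

mutual
theorem matches_self (R : List (Rule F V)) (τ : V → Term F V) :
    ∀ w : Term F V, (∀ x ∈ vars w, IsGround (τ x) ∧ NormalForm R (τ x)) →
      Matches R w (subst τ w)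
  | .var x, h => by
      have hx := h x (by simp [vars])
      exact (by simpa [subst] using Matches.var x (τ x) hx.1 hx.2 :
        Matches R (Term.var x) (subst τ (Term.var x)))
  | .app f ts, h => by
      rw [show subst τ (Term.app f ts) = Term.app f (ts.map (subst τ)) by
        simp [subst, substList_eq_map]]
      refine Matches.app f (by simp) ?_
      intro i ui gi hui hgi
      have hgi' : gi = subst τ ui := by
        rw [List.getElem?_map, hui] at hgi
        simpa using hgi.symm
      subst hgi'
      exact matches_self_list R τ ts (by simpa [vars] using h) ui (List.mem_of_getElem? hui)
theorem matches_self_list (R : List (Rule F V)) (τ : V → Term F V) :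
    ∀ ts : List (Term F V), (∀ x ∈ varsList ts, IsGround (τ x) ∧ NormalForm R (τ x)) →
      ∀ u ∈ ts, Matches R u (subst τ u)
  | t :: ts, h, u, hu => by
      rcases List.mem_cons.mp hu with hut | hu'
      · rw [hut]; exact matches_self R τ t (fun x hx => h x (by simp [varsList]; exact Or.inl hx))
      · exact matches_self_list R τ ts
          (fun x hx => h x (by simp [varsList]; exact Or.inr hx)) u hu'
end

theorem step_main (R : List (Rule F V)) (hRS : IsRS R) (XA : Set V) :
    ∀ (p : List ℕ) (u g g' l r : Term F V),
      (⟨l, r⟩ : Rule F V) ∈ R →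
      InnAtWith R l r p g g' →
      Matches R u g →
      Usable R XA u ⟨l, r⟩ ∧
        ∃ u', Matches R u' g' ∧ ∀ ρ, Usable R XA u' ρ → Usable R XA u ρ := by
  intro p
  induction p with
  | nil =>
      intro u g g' l r hmem hstep hm
      obtain ⟨⟨τ, h1, h2⟩, hinn⟩ := hstep
      cases hm with
      | var x g hgr hnf =>
          exact absurd ⟨g', [], ⟨l, r⟩, hmem, τ, h1, h2⟩ hnf
      | app f hlen hall =>
          rename_i us gs
          have hg : Term.app f gs = subst τ l := by simpa [subtermAt] using h1
          have hg' : g' = subst τ r := by simpa [replaceAt] using h2.symm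
          obtain ⟨hnv, hvr⟩ := hRS ⟨l, r⟩ hmem
          cases hl : l with
          | var y => exact absurd rfl (hl ▸ hnv y)
          | app fl ls =>
              subst hl
              rw [show subst τ (Term.app fl ls) = Term.app fl (substList τ ls) from rfl] at hg
              injection hg with hf hgs
              subst hf
              have hge : subst τ (Term.app f ls) = Term.app f gs := by
                rw [show subst τ (Term.app f ls) = Term.app f (substList τ ls) from rfl, hgs]
              have htop : Term.top (Rule.lhs ⟨Term.app f ls, r⟩) = some f := rfl
              have hgrg : IsGround (subst τ (Term.app f ls)) := by
                rw [hge]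
                exact (Matches.app f hlen hall).ground
              have hkey : ∀ x ∈ vars (Term.app f ls), IsGround (τ x) ∧ NormalForm R (τ x) := by
                intro x hx
                obtain ⟨q, hq⟩ := exists_subterm_var _ hx
                have hq' : subtermAt q (subst τ (Term.app f ls)) = some (τ x) := by
                  have := subtermAt_subst τ q _ _ hq
                  simpa [subst] using this
                have hqne : q ≠ [] := by
                  intro h; subst h
                  simp [subtermAt] at hq
                constructor
                · have hsub := vars_subtermAt q _ _ hq'
                  rw [hgrg] at hsub
                  exact Set.subset_empty_iff.mp hsub
                · rintro ⟨w', q', hred⟩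
                  have hred' : ReducibleAt R (Term.app f gs) (q ++ q') := by
                    rw [← hge]
                    exact reducibleAt_lift R q _ _ hq' q' ⟨w', hred⟩
                  refine hinn (q ++ q') ⟨List.nil_prefix, ?_⟩ hred'
                  intro hcontra
                  exact hqne (List.append_eq_nil_iff.mp hcontra.symm).1
              refine ⟨Usable.rls hmem htop, r, ?_, ?_⟩
              · rw [hg']
                exact matches_self R τ r (fun x hx => hkey x (hvr hx))
              · intro ρ hρ
                exact Usable.rhs hmem htop hρ
  | cons i p ih =>
      intro u g g' l r hmem hstep hm
      obtain ⟨⟨τ, h1, h2⟩, hinn⟩ := hstep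
      cases hm with
      | var x g hgr hnf =>
          exact absurd ⟨g', i :: p, ⟨l, r⟩, hmem, τ, h1, h2⟩ hnf
      | app f hlen hall =>
          rename_i us gs
          cases hgi : gs[i]? with
          | none => simp [subtermAt, hgi] at h1
          | some gi =>
              simp only [subtermAt, hgi] at h1
              simp only [replaceAt, hgi] at h2
              cases hgi' : replaceAt p gi (subst τ r) with
              | none => simp [hgi'] at h2
              | some gi' =>
                  simp only [hgi', Option.some.injEq] at h2
                  have hg'eq : g' = Term.app f (gs.set i gi') := h2.symm
                  have hilt : i < gs.length := by
                    by_contra hcon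
                    rw [List.getElem?_eq_none (by omega)] at hgi
                    simp at hgi
                  have hui : us[i]? = some us[i] := List.getElem?_eq_getElem (by omega)
                  have hmui : Matches R us[i] gi := hall i us[i] gi hui hgi
                  have hinn' : ∀ q, StrictBelow p q → ¬ ReducibleAt R gi q := by
                    rintro q ⟨hpre, hne⟩ hred
                    have hsubi : subtermAt [i] (Term.app f gs) = some gi := by
                      rw [subtermAt, hgi]; rfl
                    have : ReducibleAt R (Term.app f gs) (i :: q) := by
                      simpa using reducibleAt_lift R [i] _ _ hsubi q hred
                    refine hinn (i :: q) ⟨?_, ?_⟩ this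
                    · exact List.cons_prefix_cons.mpr ⟨rfl, hpre⟩
                    · simpa using hne
                  obtain ⟨hU, ui', hm', himp⟩ :=
                    ih us[i] gi gi' l r hmem ⟨⟨τ, h1, hgi'⟩, hinn'⟩ hmui
                  have humem : us[i] ∈ us := List.getElem_mem _
                  refine ⟨Usable.arg humem hU, Term.app f (us.set i ui'), ?_, ?_⟩
                  · rw [hg'eq]
                    refine Matches.app f (by simp [hlen]) ?_
                    intro j uj gj huj hgj
                    by_cases hji : j = i
                    · subst hji
                      rw [List.getElem?_set_self (by omega)] at huj
                      rw [List.getElem?_set_self (by omega)] at hgj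
                      cases huj; cases hgj
                      exact hm'
                    · rw [List.getElem?_set_ne (fun h => hji h.symm)] at huj
                      rw [List.getElem?_set_ne (fun h => hji h.symm)] at hgj
                      exact hall j uj gj huj hgj
                  · intro ρ hρ
                    cases hρ with
                    | rls hmem2 htop2 => exact Usable.rls hmem2 htop2
                    | arg hw hUw =>
                        rcases List.mem_or_eq_of_mem_set hw with hw' | rfl
                        · exact Usable.arg hw' hUw
                        · exact Usable.arg humem (himp ρ hUw)
                    | rhs hmem2 htop2 hU2 => exact Usable.rhs hmem2 htop2 hU2

end Aux

/-- every rule used in an innermost rewrite chain starting from a ground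
instance `αt` (where `α` maps the abstraction variables of `t` to normal forms)
belongs to the usable rules `U(t)`. -/
theorem usable_rules_cover_chain {F V : Type*}
    (R : List (Rule F V)) (hRS : IsRS R) (XA : Set V)
    (t : Term F V)
    (α : V → Term F V)
    -- `α` is ground on the variables of `t` (`Var(t) ⊆ Dom(α)`)
    (hg : ∀ x ∈ vars t, IsGround (α x))
    -- `α` maps every abstraction variable occurring in `t` to an `R`-normal form
    (hnf : ∀ x ∈ vars t, x ∈ XA → NormalForm R (α x))
    (n : ℕ) (terms : ℕ → Term F V) (pos : ℕ → List ℕ) (rules : ℕ → Rule F V)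
    (h0 : terms 0 = subst α t)
    (hchain : ∀ i < n, rules i ∈ R ∧
        InnAtWith R (rules i).lhs (rules i).rhs (pos i) (terms i) (terms (i + 1))) :
    ∀ i < n, Usable R XA t (rules i) := by
  by_cases hXA : ∀ x ∈ vars t, x ∈ XA
  · have inv : ∀ i : ℕ, i ≤ n →
        ∃ u, Matches R u (terms i) ∧ ∀ ρ, Usable R XA u ρ → Usable R XA t ρ := by
      intro i
      induction i with
      | zero =>
          intro _
          refine ⟨t, ?_, fun ρ h => h⟩
          rw [h0]
          exact matches_self R α t (fun x hx => ⟨hg x hx, hnf x hx (hXA x hx)⟩)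
      | succ i ihi =>
          intro hle
          obtain ⟨u, hmu, himp⟩ := ihi (by omega)
          obtain ⟨hr, hstep⟩ := hchain i (by omega)
          obtain ⟨_, u', hm', himp'⟩ :=
            step_main R hRS XA (pos i) u (terms i) (terms (i + 1)) _ _ hr hstep hmu
          exact ⟨u', hm', fun ρ h => himp ρ (himp' ρ h)⟩
    intro i hi
    obtain ⟨u, hmu, himp⟩ := inv i (by omega)
    obtain ⟨hr, hstep⟩ := hchain i hi
    obtain ⟨hU, -⟩ :=
      step_main R hRS XA (pos i) u (terms i) (terms (i + 1)) _ _ hr hstep hmu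
    exact himp _ hU
  · push_neg at hXA
    obtain ⟨x, hx, hnx⟩ := hXA
    intro i hi
    exact usable_of_var R XA hnx (hchain i hi).1 t hx

end TRS
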